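/- Let A ∈ ℝ^{n×d}, b ∈ ℝ^n, k ≤ rank(A) with σ_k(A) > σ_{k+1}(A), and let R ∈ ℝ^{d×s} with s ≥ k and rank(AR) ≥ k. Let ν ∈ (0,1). If d₂(U_{AR,k}, U_{A,k}) ≤ ν, then A·x_{R,k} is a (ν, ν)-approximate PCP of rank k. -/

import Mathlib

open Matrix MeasureTheory

noncomputable section

/-- Euclidean norm of a vector in `ℝ^n`. -/
def vnorm {n : ℕ} (v : Fin n → ℝ) : ℝ := Real.sqrt (∑ i, v i ^ 2)

/-- Spectral norm of a matrix (operator norm as a map between Euclidean spaces). -/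
def spec {m n : ℕ} (M : Matrix (Fin m) (Fin n) ℝ) : ℝ :=
  ‖LinearMap.toContinuousLinearMap (Matrix.toEuclideanLin M)‖

/-- The four Moore-Penrose conditions. -/
def IsMP {m n : ℕ} (X : Matrix (Fin m) (Fin n) ℝ) (Y : Matrix (Fin n) (Fin m) ℝ) : Prop :=
  X * Y * X = X ∧ Y * X * Y = Y ∧ (X * Y)ᵀ = X * Y ∧ (Y * X)ᵀ = Y * X

/-- The Moore-Penrose pseudoinverse (it always exists and is unique, so this choice-based
definition picks out exactly the Moore-Penrose pseudoinverse). -/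
def pinv {m n : ℕ} (X : Matrix (Fin m) (Fin n) ℝ) : Matrix (Fin n) (Fin m) ℝ := by
  classical exact if h : ∃ Y, IsMP X Y then h.choose else 0

/-- Orthogonal projection onto the column space of a matrix: `P_X = X X⁺`. -/
def projCol {m n : ℕ} (X : Matrix (Fin m) (Fin n) ℝ) : Matrix (Fin m) (Fin m) ℝ := X * pinv X

/-- Distance between column spaces: `d₂(U, W) = ‖P_U - P_W‖₂`. -/
def d2 {m p q : ℕ} (U : Matrix (Fin m) (Fin p) ℝ) (W : Matrix (Fin m) (Fin q) ℝ) : ℝ :=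
  spec (projCol U - projCol W)

/-- `(U, s, V)` is a thin SVD of `X`: orthonormal columns, nonincreasing nonnegative
singular values, and `X = U (diag s) Vᵀ`. -/
def IsThinSVD {m n p : ℕ} (X : Matrix (Fin m) (Fin n) ℝ) (U : Matrix (Fin m) (Fin p) ℝ)
    (s : Fin p → ℝ) (V : Matrix (Fin n) (Fin p) ℝ) : Prop :=
  Uᵀ * U = 1 ∧ Vᵀ * V = 1 ∧ Antitone s ∧ (∀ i, 0 ≤ s i) ∧ X = U * Matrix.diagonal s * Vᵀ

/-- The matrix of the first `k` columns. -/
def firstCols {m p : ℕ} (U : Matrix (Fin m) (Fin p) ℝ) (k : ℕ) (h : k ≤ p) :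
    Matrix (Fin m) (Fin k) ℝ := U.submatrix id (Fin.castLE h)

/-- The matrix of the remaining columns (columns `k+1, …, p` in 1-based indexing). -/
def tailCols {m p : ℕ} (U : Matrix (Fin m) (Fin p) ℝ) (k : ℕ) (h : k ≤ p) :
    Matrix (Fin m) (Fin (p - k)) ℝ :=
  U.submatrix id (fun j => ⟨k + j.1, by have := j.2; omega⟩)

/-- `sv s i` is the `i`-th singular value (1-indexed), `0` past the end. -/
def sv {p : ℕ} (s : Fin p → ℝ) (i : ℕ) : ℝ := by
  classical exact if h : i - 1 < p then s ⟨i - 1, h⟩ else 0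

end

noncomputable section

/-- The PCR solution for the thin-SVD right factor `VA`: `x_k = V_{A,k}(A V_{A,k})⁺ b`. -/
def pcrSol {n d p k : ℕ} (A : Matrix (Fin n) (Fin d) ℝ) (b : Fin n → ℝ)
    (VA : Matrix (Fin d) (Fin p) ℝ) (hk : k ≤ p) : Fin d → ℝ :=
  (firstCols VA k hk * pinv (A * firstCols VA k hk)).mulVec b

/-- `x̃` is an `(ε, υ)`-approximate PCR of rank `k` (relative to the thin SVD right factor
`VA` of `A`): `| ‖A x̃ − b‖ − ‖A x_k − b‖ | ≤ ε ‖b‖` and `‖V_{A,k+}ᵀ x̃‖ ≤ υ ‖b‖`. -/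
def IsApproxPCR {n d p k : ℕ} (A : Matrix (Fin n) (Fin d) ℝ) (b : Fin n → ℝ)
    (VA : Matrix (Fin d) (Fin p) ℝ) (hk : k ≤ p) (ε υ : ℝ) (xt : Fin d → ℝ) : Prop :=
  |vnorm (A.mulVec xt - b) - vnorm (A.mulVec (pcrSol A b VA hk) - b)| ≤ ε * vnorm b ∧
  vnorm ((tailCols VA k hk)ᵀ.mulVec xt) ≤ υ * vnorm b

/-- `b̃` is an `(ε, υ)`-approximate PCP of rank `k` (relative to a thin SVD `(UA, ·, VA)`
of `A`): `| ‖b̃ − b‖ − ‖b_k − b‖ | ≤ ε ‖b‖` and `‖U_{A,k+}ᵀ b̃‖ ≤ υ ‖b‖`, where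
`b_k = A x_k` is the PCP solution. -/
def IsApproxPCP {n d p k : ℕ} (A : Matrix (Fin n) (Fin d) ℝ) (b : Fin n → ℝ)
    (UA : Matrix (Fin n) (Fin p) ℝ) (VA : Matrix (Fin d) (Fin p) ℝ) (hk : k ≤ p)
    (ε υ : ℝ) (bt : Fin n → ℝ) : Prop :=
  |vnorm (bt - b) - vnorm (A.mulVec (pcrSol A b VA hk) - b)| ≤ ε * vnorm b ∧
  vnorm ((tailCols UA k hk)ᵀ.mulVec bt) ≤ υ * vnorm b

end

noncomputable section
-- ==================== AUX ====================
namespace PCPaux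

open Matrix

lemma vnorm_eq_norm {n : ℕ} (v : Fin n → ℝ) :
    vnorm v = ‖(WithLp.equiv 2 (Fin n → ℝ)).symm v‖ := by
  rw [EuclideanSpace.norm_eq]
  simp [vnorm, Real.norm_eq_abs, sq_abs]

lemma vnorm_nonneg {n : ℕ} (v : Fin n → ℝ) : 0 ≤ vnorm v := Real.sqrt_nonneg _

lemma vnorm_sq_eq_dot {n : ℕ} (v : Fin n → ℝ) : vnorm v ^ 2 = v ⬝ᵥ v := by
  rw [vnorm, Real.sq_sqrt (Finset.sum_nonneg fun i _ => sq_nonneg _)]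
  simp [dotProduct, sq]

lemma dot_le_vnorm_mul {n : ℕ} (v w : Fin n → ℝ) : v ⬝ᵥ w ≤ vnorm v * vnorm w := by
  have h := real_inner_le_norm ((WithLp.equiv 2 (Fin n → ℝ)).symm v)
      ((WithLp.equiv 2 (Fin n → ℝ)).symm w)
  rw [← vnorm_eq_norm, ← vnorm_eq_norm] at h
  refine le_trans (le_of_eq ?_) h
  simp [dotProduct, PiLp.inner_apply, RCLike.inner_apply, mul_comm]

lemma vnorm_mulVec_le {m n : ℕ} (M : Matrix (Fin m) (Fin n) ℝ) (v : Fin n → ℝ) :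
    vnorm (M *ᵥ v) ≤ spec M * vnorm v := by
  have h := (LinearMap.toContinuousLinearMap (Matrix.toEuclideanLin M)).le_opNorm
      ((WithLp.equiv 2 (Fin n → ℝ)).symm v)
  rw [LinearMap.coe_toContinuousLinearMap'] at h
  change ‖(WithLp.equiv 2 (Fin m → ℝ)).symm (M *ᵥ v)‖ ≤ _ at h
  rw [vnorm_eq_norm, vnorm_eq_norm]
  exact h

lemma dot_mulVec_left {m n : ℕ} (M : Matrix (Fin m) (Fin n) ℝ) (a : Fin n → ℝ) (b : Fin m → ℝ) :
    (M *ᵥ a) ⬝ᵥ b = a ⬝ᵥ (Mᵀ *ᵥ b) := by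
  rw [dotProduct_comm, dotProduct_mulVec, mulVec_transpose, dotProduct_comm]

lemma vnorm_mulVec_of_orthonormal {m p : ℕ} {W : Matrix (Fin m) (Fin p) ℝ}
    (hW : Wᵀ * W = 1) (u : Fin p → ℝ) : vnorm (W *ᵥ u) = vnorm u := by
  rw [vnorm, vnorm]
  congr 1
  have h1 : (W *ᵥ u) ⬝ᵥ (W *ᵥ u) = u ⬝ᵥ u := by
    rw [dot_mulVec_left, mulVec_mulVec, hW, one_mulVec]
  have h2 := vnorm_sq_eq_dot (W *ᵥ u)
  have h3 := vnorm_sq_eq_dot u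
  simpa [dotProduct, sq] using h1

lemma vnorm_transpose_mulVec_le {m p : ℕ} {W : Matrix (Fin m) (Fin p) ℝ}
    (hW : Wᵀ * W = 1) (v : Fin m → ℝ) : vnorm (Wᵀ *ᵥ v) ≤ vnorm v := by
  set u := Wᵀ *ᵥ v with hu
  rcases eq_or_lt_of_le (vnorm_nonneg u) with h0 | h0
  · rw [← h0]; exact vnorm_nonneg v
  have key : vnorm u * vnorm u ≤ vnorm v * vnorm u := by
    have h1 : u ⬝ᵥ u = v ⬝ᵥ (W *ᵥ u) := by
      rw [hu, dot_mulVec_left, transpose_transpose]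
    have h2 : v ⬝ᵥ (W *ᵥ u) ≤ vnorm v * vnorm (W *ᵥ u) := dot_le_vnorm_mul _ _
    rw [vnorm_mulVec_of_orthonormal hW] at h2
    calc vnorm u * vnorm u = u ⬝ᵥ u := by rw [← sq, vnorm_sq_eq_dot]
      _ ≤ vnorm v * vnorm u := h1 ▸ h2
  exact le_of_mul_le_mul_right key h0

-- MP pseudoinverse facts
lemma isMP_mul_eq {m n : ℕ} {X : Matrix (Fin m) (Fin n) ℝ} {Y Z : Matrix (Fin n) (Fin m) ℝ}
    (hY : IsMP X Y) (hZ : IsMP X Z) : X * Y = X * Z := by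
  obtain ⟨hY1, -, hY3, -⟩ := hY
  obtain ⟨hZ1, -, hZ3, -⟩ := hZ
  calc X * Y = (X * Z * X) * Y := by rw [hZ1]
    _ = (X * Z) * (X * Y) := by rw [Matrix.mul_assoc (X * Z) X Y]
    _ = ((X * Y)ᵀ * (X * Z)ᵀ)ᵀ := by
        rw [transpose_mul ((X * Y)ᵀ) ((X * Z)ᵀ), transpose_transpose, transpose_transpose]
    _ = ((X * Y) * (X * Z))ᵀ := by rw [hY3, hZ3]
    _ = ((X * Y * X) * Z)ᵀ := by rw [Matrix.mul_assoc (X * Y) X Z]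
    _ = (X * Z)ᵀ := by rw [hY1]
    _ = X * Z := hZ3

lemma mul_pinv_eq {m n : ℕ} {X : Matrix (Fin m) (Fin n) ℝ} {Y : Matrix (Fin n) (Fin m) ℝ}
    (hY : IsMP X Y) : X * pinv X = X * Y := by
  have hex : ∃ Y, IsMP X Y := ⟨Y, hY⟩
  have : pinv X = hex.choose := by rw [pinv, dif_pos hex]
  rw [this]
  exact isMP_mul_eq hex.choose_spec hY

lemma isMP_orthonormal {m p : ℕ} {W : Matrix (Fin m) (Fin p) ℝ} (hW : Wᵀ * W = 1) :
    IsMP W Wᵀ := by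
  refine ⟨?_, ?_, ?_, ?_⟩
  · rw [Matrix.mul_assoc, hW, Matrix.mul_one]
  · rw [Matrix.mul_assoc, ← Matrix.mul_assoc Wᵀ, hW, Matrix.one_mul]
  · rw [transpose_mul, transpose_transpose]
  · rw [hW, transpose_one]

lemma projCol_orthonormal {m p : ℕ} {W : Matrix (Fin m) (Fin p) ℝ} (hW : Wᵀ * W = 1) :
    projCol W = W * Wᵀ := mul_pinv_eq (isMP_orthonormal hW)

lemma key_proj {m k : ℕ} {U1 : Matrix (Fin m) (Fin k) ℝ} {dg : Fin k → ℝ}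
    (hU : U1ᵀ * U1 = 1) (hd : ∀ i, dg i ≠ 0) :
    (U1 * diagonal dg) * pinv (U1 * diagonal dg) = U1 * U1ᵀ := by
  set X := U1 * diagonal dg
  set Y := (diagonal fun i => (dg i)⁻¹) * U1ᵀ with hYdef
  have hDD : diagonal dg * diagonal (fun i => (dg i)⁻¹) = 1 := by
    rw [diagonal_mul_diagonal]
    convert diagonal_one
    exact mul_inv_cancel₀ (hd _)
  have hXY : X * Y = U1 * U1ᵀ := by
    show U1 * diagonal dg * ((diagonal fun i => (dg i)⁻¹) * U1ᵀ) = _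
    rw [Matrix.mul_assoc, ← Matrix.mul_assoc (diagonal dg), hDD, Matrix.one_mul]
  have hYX : Y * X = 1 := by
    show (diagonal fun i => (dg i)⁻¹) * U1ᵀ * (U1 * diagonal dg) = 1
    rw [Matrix.mul_assoc, ← Matrix.mul_assoc U1ᵀ, hU, Matrix.one_mul,
      diagonal_mul_diagonal]
    convert diagonal_one
    exact inv_mul_cancel₀ (hd _)
  have hMP : IsMP X Y := by
    refine ⟨?_, ?_, ?_, ?_⟩
    · rw [Matrix.mul_assoc, hYX, Matrix.mul_one]
    · rw [hYX, Matrix.one_mul]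
    · rw [hXY, transpose_mul, transpose_transpose]
    · rw [hYX, transpose_one]
  rw [mul_pinv_eq hMP, hXY]

-- submatrix / SVD lemmas
lemma submatrix_block {m p a b : ℕ} {U : Matrix (Fin m) (Fin p) ℝ} (hU : Uᵀ * U = 1)
    (f : Fin a → Fin p) (g : Fin b → Fin p) (i : Fin a) (j : Fin b) :
    ((U.submatrix id f)ᵀ * U.submatrix id g) i j = if f i = g j then 1 else 0 := by
  have h : ((U.submatrix id f)ᵀ * U.submatrix id g) i j = (Uᵀ * U) (f i) (g j) := by
    simp [Matrix.mul_apply]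
  rw [h, hU, Matrix.one_apply]

lemma firstCols_orthonormal {m p k : ℕ} {U : Matrix (Fin m) (Fin p) ℝ} (hU : Uᵀ * U = 1)
    (h : k ≤ p) : (firstCols U k h)ᵀ * firstCols U k h = 1 := by
  ext i j
  rw [firstCols, submatrix_block hU, Matrix.one_apply]
  simp [Fin.castLE_inj]

lemma tailCols_orthonormal {m p k : ℕ} {U : Matrix (Fin m) (Fin p) ℝ} (hU : Uᵀ * U = 1)
    (h : k ≤ p) : (tailCols U k h)ᵀ * tailCols U k h = 1 := by
  ext i j
  rw [tailCols, submatrix_block hU, Matrix.one_apply]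
  have : (⟨k + i.1, by omega⟩ : Fin p) = ⟨k + j.1, by omega⟩ ↔ i = j := by
    constructor
    · intro hij
      have := Fin.mk.injEq (k + i.1) _ (k + j.1) _ |>.mp (by exact_mod_cast hij)
      exact Fin.ext (by omega)
    · intro hij; subst hij; rfl
  simp [this]

lemma tail_mul_first {m p k : ℕ} {U : Matrix (Fin m) (Fin p) ℝ} (hU : Uᵀ * U = 1)
    (h : k ≤ p) : (tailCols U k h)ᵀ * firstCols U k h = 0 := by
  ext i j
  rw [tailCols, firstCols, submatrix_block hU]
  have : (⟨k + i.1, by omega⟩ : Fin p) ≠ Fin.castLE h j := by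
    intro hij
    have h1 : k + i.1 = (j : ℕ) := by
      simpa [Fin.ext_iff] using hij
    have := j.2
    omega
  simp [this]

lemma mul_one_submatrix {a m b : ℕ} (M : Matrix (Fin a) (Fin m) ℝ) (c : Fin b → Fin m) :
    M * (1 : Matrix (Fin m) (Fin m) ℝ).submatrix id c = M.submatrix id c := by
  ext i j
  rw [Matrix.mul_apply]
  simp [Matrix.one_apply, Finset.sum_ite_eq']

lemma svd_first_mul {n' d' p k : ℕ} {A : Matrix (Fin n') (Fin d') ℝ}
    {U : Matrix (Fin n') (Fin p) ℝ} {s : Fin p → ℝ} {V : Matrix (Fin d') (Fin p) ℝ}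
    (hSVD : IsThinSVD A U s V) (hk : k ≤ p) :
    A * firstCols V k hk
      = firstCols U k hk * diagonal (fun i : Fin k => s (Fin.castLE hk i)) := by
  obtain ⟨hU, hV, -, -, hA⟩ := hSVD
  have h1 : Vᵀ * firstCols V k hk = (1 : Matrix (Fin p) (Fin p) ℝ).submatrix id (Fin.castLE hk) := by
    ext i j
    have : (Vᵀ * firstCols V k hk) i j = (Vᵀ * V) i (Fin.castLE hk j) := by
      simp [Matrix.mul_apply, firstCols]
    rw [this, hV]
    rfl
  rw [hA, Matrix.mul_assoc (U * diagonal s) Vᵀ _, h1, mul_one_submatrix]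
  ext i j
  simp [firstCols, Matrix.mul_diagonal]

lemma sval_pos_of_rank {n' d' p k : ℕ} {A : Matrix (Fin n') (Fin d') ℝ}
    {U : Matrix (Fin n') (Fin p) ℝ} {s : Fin p → ℝ} {V : Matrix (Fin d') (Fin p) ℝ}
    (hSVD : IsThinSVD A U s V) (hk : k ≤ p) (hrank : k ≤ A.rank) :
    ∀ i : Fin p, (i : ℕ) < k → 0 < s i := by
  obtain ⟨hU, hV, hmono, hpos, hA⟩ := hSVD
  intro i hi
  rcases (hpos i).lt_or_eq with h | h
  · exact h
  exfalso
  have hzero : ∀ j : Fin p, i ≤ j → s j = 0 :=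
    fun j hj => le_antisymm (h ▸ hmono hj) (hpos j)
  have h1 : A.rank ≤ (diagonal s).rank := by
    rw [hA]
    exact le_trans (Matrix.rank_mul_le_left _ _) (Matrix.rank_mul_le_right _ _)
  rw [Matrix.rank_diagonal] at h1
  have h2 : Fintype.card {j : Fin p // s j ≠ 0} ≤ (i : ℕ) := by
    have hlt : ∀ j : {j : Fin p // s j ≠ 0}, (j.1 : ℕ) < (i : ℕ) := by
      intro j
      by_contra hc
      exact j.2 (hzero j.1 (by omega))
    have hinj : Function.Injective (fun j : {j : Fin p // s j ≠ 0} =>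
        (⟨(j.1 : ℕ), hlt j⟩ : Fin (i : ℕ))) := by
      intro a b hab
      have : (a.1 : ℕ) = (b.1 : ℕ) := by simpa [Fin.ext_iff] using hab
      exact Subtype.ext (Fin.ext this)
    simpa using Fintype.card_le_of_injective _ hinj
  omega

end PCPaux
end

open PCPaux in
/-- Theorem: dimensionality reduction gives approximate PCP.
If `d₂(U_{AR,k}, U_{A,k}) ≤ ν` then `A x_{R,k}` is a `(ν, ν)`-approximate PCP of rank `k`,
where `x_{R,k} = R V_{AR,k} (A R V_{AR,k})⁺ b`. -/
theorem statement2
    {n d s k : ℕ} (hk0 : 0 < k)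
    (A : Matrix (Fin n) (Fin d) ℝ) (b : Fin n → ℝ)
    (UA : Matrix (Fin n) (Fin (min n d)) ℝ) (sA : Fin (min n d) → ℝ)
    (VA : Matrix (Fin d) (Fin (min n d)) ℝ)
    (hSVD : IsThinSVD A UA sA VA)
    (hkrank : k ≤ A.rank) (hkp : k ≤ min n d)
    (hgap : sv sA (k + 1) < sv sA k)
    (hks : k ≤ s) (R : Matrix (Fin d) (Fin s) ℝ)
    (hkrankAR : k ≤ (A * R).rank) (hkq : k ≤ min n s)
    (UR : Matrix (Fin n) (Fin (min n s)) ℝ) (sR : Fin (min n s) → ℝ)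
    (VR : Matrix (Fin s) (Fin (min n s)) ℝ)
    (hSVDR : IsThinSVD (A * R) UR sR VR)
    (ν : ℝ) (hν0 : 0 < ν) (hν1 : ν < 1)
    (hdist : d2 (firstCols UR k hkq) (firstCols UA k hkp) ≤ ν) :
    IsApproxPCP A b UA VA hkp ν ν
      (A.mulVec ((R * firstCols VR k hkq * pinv (A * R * firstCols VR k hkq)).mulVec b)) := by
  have hUAo : UAᵀ * UA = 1 := hSVD.1
  have hURo : URᵀ * UR = 1 := hSVDR.1
  have h1A : (firstCols UA k hkp)ᵀ * firstCols UA k hkp = 1 := firstCols_orthonormal hUAo hkp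
  have h1R : (firstCols UR k hkq)ᵀ * firstCols UR k hkq = 1 := firstCols_orthonormal hURo hkq
  have h2A : (tailCols UA k hkp)ᵀ * tailCols UA k hkp = 1 := tailCols_orthonormal hUAo hkp
  have h21 : (tailCols UA k hkp)ᵀ * firstCols UA k hkp = 0 := tail_mul_first hUAo hkp
  have hdA : ∀ i : Fin k, (fun i : Fin k => sA (Fin.castLE hkp i)) i ≠ 0 := fun i =>
    (sval_pos_of_rank hSVD hkp hkrank _ (by simpa using i.2)).ne'
  have hdR : ∀ i : Fin k, (fun i : Fin k => sR (Fin.castLE hkq i)) i ≠ 0 := fun i =>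
    (sval_pos_of_rank hSVDR hkq hkrankAR _ (by simpa using i.2)).ne'
  have hPA : (A * firstCols VA k hkp) * pinv (A * firstCols VA k hkp)
      = firstCols UA k hkp * (firstCols UA k hkp)ᵀ := by
    rw [svd_first_mul hSVD hkp]; exact key_proj h1A hdA
  have hPR : (A * R * firstCols VR k hkq) * pinv (A * R * firstCols VR k hkq)
      = firstCols UR k hkq * (firstCols UR k hkq)ᵀ := by
    rw [svd_first_mul hSVDR hkq]; exact key_proj h1R hdR
  have hbt : A *ᵥ ((R * firstCols VR k hkq * pinv (A * R * firstCols VR k hkq)) *ᵥ b)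
      = (firstCols UR k hkq * (firstCols UR k hkq)ᵀ) *ᵥ b := by
    rw [mulVec_mulVec, ← hPR]
    congr 1
    rw [← Matrix.mul_assoc, ← Matrix.mul_assoc]
  have hbk : A *ᵥ pcrSol A b VA hkp = (firstCols UA k hkp * (firstCols UA k hkp)ᵀ) *ᵥ b := by
    rw [pcrSol, mulVec_mulVec, ← hPA, ← Matrix.mul_assoc]
  have hd2 : spec (firstCols UR k hkq * (firstCols UR k hkq)ᵀ
      - firstCols UA k hkp * (firstCols UA k hkp)ᵀ) ≤ ν := by
    rw [← projCol_orthonormal h1R, ← projCol_orthonormal h1A]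
    exact hdist
  have hdiff : vnorm ((firstCols UR k hkq * (firstCols UR k hkq)ᵀ
      - firstCols UA k hkp * (firstCols UA k hkp)ᵀ) *ᵥ b) ≤ ν * vnorm b :=
    le_trans (vnorm_mulVec_le _ b) (mul_le_mul_of_nonneg_right hd2 (vnorm_nonneg b))
  refine ⟨?_, ?_⟩
  · rw [hbt, hbk]
    have htri : |vnorm ((firstCols UR k hkq * (firstCols UR k hkq)ᵀ) *ᵥ b - b)
        - vnorm ((firstCols UA k hkp * (firstCols UA k hkp)ᵀ) *ᵥ b - b)|
        ≤ vnorm (((firstCols UR k hkq * (firstCols UR k hkq)ᵀ) *ᵥ b - b)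
          - ((firstCols UA k hkp * (firstCols UA k hkp)ᵀ) *ᵥ b - b)) := by
      rw [vnorm_eq_norm, vnorm_eq_norm, vnorm_eq_norm]
      exact abs_norm_sub_norm_le _ _
    refine le_trans htri (le_trans (le_of_eq ?_) hdiff)
    rw [Matrix.sub_mulVec]
    congr 1
    abel
  · rw [hbt]
    have hz : (tailCols UA k hkp)ᵀ *ᵥ ((firstCols UR k hkq * (firstCols UR k hkq)ᵀ) *ᵥ b)
        = (tailCols UA k hkp)ᵀ *ᵥ ((firstCols UR k hkq * (firstCols UR k hkq)ᵀ
          - firstCols UA k hkp * (firstCols UA k hkp)ᵀ) *ᵥ b) := by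
      rw [Matrix.sub_mulVec, Matrix.mulVec_sub]
      have hzz : (tailCols UA k hkp)ᵀ *ᵥ (firstCols UA k hkp * (firstCols UA k hkp)ᵀ) *ᵥ b = 0 := by
        rw [mulVec_mulVec, ← Matrix.mul_assoc, h21, Matrix.zero_mul, Matrix.zero_mulVec]
      rw [hzz, sub_zero]
    rw [hz]
    exact le_trans (vnorm_transpose_mulVec_le h2A _) hdiff
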